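/- In the algebra f, for every integer m with 0 ≤ m ≤ N, one has θ_j θ_i^{(m)} = Σ_{p=0}^{m} v^{(p−N)(m−p)} θ_i^{(m−p)} f(i,j;p). -/

import Mathlib

noncomputable section

open Finset

/-- The base field `K = ℚ(v)`. -/
abbrev K : Type := RatFunc ℚ

/-- The variable `v`. -/
def v : K := RatFunc.X

/-- The balanced quantum integer `[n]_v = (v^n - v^{-n})/(v - v^{-1})`. -/
def qnum (n : ℕ) : K := (v ^ (n : ℤ) - v ^ (-(n : ℤ))) / (v - v⁻¹)

/-- The quantum factorial `[n]_v!`. -/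
def qfac : ℕ → K
  | 0 => 1
  | n + 1 => qfac n * qnum (n + 1)

/-- Divided power `x^{(n)} = x^n/[n]_v!` in the free algebra. -/
def fdp (x : FreeAlgebra K (Fin 2)) (n : ℕ) : FreeAlgebra K (Fin 2) :=
  (qfac n)⁻¹ • x ^ n

/-- The generator `θ_i` in the free algebra. -/
def θi' : FreeAlgebra K (Fin 2) := FreeAlgebra.ι K 0

/-- The generator `θ_j` in the free algebra. -/
def θj' : FreeAlgebra K (Fin 2) := FreeAlgebra.ι K 1

/-- The two quantum Serre relations defining Lusztig's algebra `f` for the quiver with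
two vertices `i, j` and `N` arrows from `j` to `i` (so `a_{ij} = a_{ji} = -N`). -/
inductive SerreRel (N : ℕ) : FreeAlgebra K (Fin 2) → FreeAlgebra K (Fin 2) → Prop
  | serre_i : SerreRel N
      (∑ k ∈ range (N + 2), ((-1 : K) ^ k) • (fdp θi' k * θj' * fdp θi' (N + 1 - k))) 0
  | serre_j : SerreRel N
      (∑ k ∈ range (N + 2), ((-1 : K) ^ k) • (fdp θj' k * θi' * fdp θj' (N + 1 - k))) 0

/-- Lusztig's algebra `f`. -/
def LusztigF (N : ℕ) : Type := RingQuot (SerreRel N)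

instance (N : ℕ) : Ring (LusztigF N) := inferInstanceAs (Ring (RingQuot (SerreRel N)))
instance (N : ℕ) : Algebra K (LusztigF N) := inferInstanceAs (Algebra K (RingQuot (SerreRel N)))

/-- The generator `θ_i` of `f`. -/
def θi (N : ℕ) : LusztigF N := RingQuot.mkAlgHom K (SerreRel N) θi'

/-- The generator `θ_j` of `f`. -/
def θj (N : ℕ) : LusztigF N := RingQuot.mkAlgHom K (SerreRel N) θj'

/-- Divided power `x^{(n)} = x^n/[n]_v!` in `f`. -/
def dp {N : ℕ} (x : LusztigF N) (n : ℕ) : LusztigF N := (qfac n)⁻¹ • x ^ n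

/-- The element `f(i,j;m) = Σ_{r+s=m} (-1)^r v^{-r(N-m+1)} θ_i^{(r)} θ_j θ_i^{(s)}`. -/
def fm (N m : ℕ) : LusztigF N :=
  ∑ r ∈ range (m + 1),
    ((-1 : K) ^ r * v ^ (-(r : ℤ) * ((N : ℤ) - (m : ℤ) + 1))) •
      (dp (θi N) r * θj N * dp (θi N) (m - r))

/-- In `f`, for `0 ≤ m ≤ N`:
`θ_j θ_i^{(m)} = Σ_{p=0}^{m} v^{(p-N)(m-p)} θ_i^{(m-p)} f(i,j;p)`. -/
lemma hv : v ≠ 0 := RatFunc.X_ne_zero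

lemma v_pow_ne_one {n : ℕ} (hn : n ≠ 0) : v ^ n ≠ 1 := by
  intro h
  have h2 : (algebraMap (Polynomial ℚ) K) (Polynomial.X ^ n) = algebraMap (Polynomial ℚ) K 1 := by
    simpa [map_pow, RatFunc.algebraMap_X, v] using h
  have h3 := RatFunc.algebraMap_injective ℚ h2
  have := congrArg Polynomial.natDegree h3
  simp [Polynomial.natDegree_X_pow] at this
  exact hn this

lemma vpow_mul (e1 e2 : ℤ) : v ^ e1 * v ^ e2 = v ^ (e1 + e2) := (zpow_add₀ hv e1 e2).symm

lemma hden : v - v⁻¹ ≠ 0 := by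
  intro h
  have h1 : v * v = 1 := by
    have := sub_eq_zero.mp h
    field_simp [hv] at this
    linear_combination this
  have : v ^ 2 = 1 := by rw [pow_two]; exact h1
  exact v_pow_ne_one (by norm_num) this

lemma qnum_ne_zero {n : ℕ} (hn : n ≠ 0) : qnum n ≠ 0 := by
  apply div_ne_zero _ hden
  intro h
  have h1 : v ^ (n : ℤ) = v ^ (-(n : ℤ)) := sub_eq_zero.mp h
  have h2 : v ^ ((n : ℤ) + (n : ℤ)) = 1 := by
    rw [zpow_add₀ hv]
    nth_rewrite 2 [h1]
    rw [vpow_mul]; simp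
  have h3 : v ^ (n + n) = 1 := by
    rw [← zpow_natCast v (n + n)]
    push_cast
    exact h2
  exact v_pow_ne_one (by omega) h3

lemma qfac_ne_zero (n : ℕ) : qfac n ≠ 0 := by
  induction n with
  | zero => simp [qfac]
  | succ k ih => exact mul_ne_zero ih (qnum_ne_zero (Nat.succ_ne_zero k))

lemma qnum_pascal (r s : ℕ) : qnum (r + s) = v ^ (s : ℤ) * qnum r + v ^ (-(r : ℤ)) * qnum s := by
  rw [qnum, qnum, qnum, ← mul_div_assoc, ← mul_div_assoc, ← add_div]
  congr 1
  have e1 : v ^ (s:ℤ) * v ^ (r:ℤ) = v ^ ((r+s:ℕ):ℤ) := by rw [vpow_mul]; congr 1; omega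
  have e2 : v ^ (s:ℤ) * v ^ (-(r:ℤ)) = v ^ ((s:ℤ) - r) := by rw [vpow_mul]; congr 1
  have e3 : v ^ (-(r:ℤ)) * v ^ (s:ℤ) = v ^ ((s:ℤ) - r) := by rw [vpow_mul]; congr 1; omega
  have e4 : v ^ (-(r:ℤ)) * v ^ (-(s:ℤ)) = v ^ (-((r+s:ℕ):ℤ)) := by
    rw [vpow_mul]; congr 1; omega
  rw [mul_sub, mul_sub, e1, e2, e3, e4]
  ring

/-- Balanced Gaussian binomial, defined by the q-Pascal recursion. -/
def qb : ℕ → ℕ → K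
  | _, 0 => 1
  | 0, _ + 1 => 0
  | a + 1, r + 1 => v ^ ((a : ℤ) - r) * qb a r + v ^ (-(r : ℤ) - 1) * qb a (r + 1)

lemma qb_zero (a : ℕ) : qb a 0 = 1 := by cases a <;> rfl

lemma qb_of_lt : ∀ {a r : ℕ}, a < r → qb a r = 0 := by
  intro a
  induction a with
  | zero => intro r hr; match r, hr with | r + 1, _ => rfl
  | succ k ih =>
    intro r hr
    match r, hr with
    | r + 1, hr =>
      show v ^ ((k : ℤ) - r) * qb k r + v ^ (-(r : ℤ) - 1) * qb k (r + 1) = 0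
      rw [ih (by omega), ih (by omega)]
      ring

lemma qb_self : ∀ a : ℕ, qb a a = 1 := by
  intro a
  induction a with
  | zero => rfl
  | succ k ih =>
    show v ^ ((k : ℤ) - k) * qb k k + v ^ (-(k : ℤ) - 1) * qb k (k + 1) = 1
    rw [ih, qb_of_lt (by omega)]
    simp

lemma qb_mul_qfac : ∀ (a r : ℕ), r ≤ a → qb a r * (qfac r * qfac (a - r)) = qfac a := by
  intro a
  induction a with
  | zero => intro r hr; interval_cases r; simp [qb_zero, qfac]
  | succ k ih =>
    intro r hr
    match r with
    | 0 => simp [qb_zero, qfac]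
    | r + 1 =>
      rcases eq_or_lt_of_le hr with h | h
      · have : r = k := by omega
        subst this
        rw [qb_self]
        simp [Nat.sub_self, qfac]
      · have hrk : r + 1 ≤ k := by omega
        show (v ^ ((k : ℤ) - r) * qb k r + v ^ (-(r : ℤ) - 1) * qb k (r + 1)) *
            (qfac (r + 1) * qfac (k + 1 - (r + 1))) = qfac (k + 1)
        have hsub1 : k + 1 - (r + 1) = k - r := by omega
        have hsub2 : k - r = (k - (r+1)) + 1 := by omega
        rw [hsub1, add_mul]
        have t1 : v ^ ((k : ℤ) - r) * qb k r * (qfac (r + 1) * qfac (k - r)) =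
            v ^ ((k : ℤ) - r) * qnum (r + 1) * qfac k := by
          have : qfac (r + 1) = qfac r * qnum (r + 1) := rfl
          rw [this]
          have := ih r (by omega)
          calc v ^ ((k : ℤ) - r) * qb k r * (qfac r * qnum (r + 1) * qfac (k - r))
              = v ^ ((k : ℤ) - r) * qnum (r + 1) * (qb k r * (qfac r * qfac (k - r))) := by ring
            _ = v ^ ((k : ℤ) - r) * qnum (r + 1) * qfac k := by rw [this]
        have t2 : v ^ (-(r : ℤ) - 1) * qb k (r + 1) * (qfac (r + 1) * qfac (k - r)) =
            v ^ (-(r : ℤ) - 1) * qnum (k - r) * qfac k := by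
          have hq : qfac (k - r) = qfac (k - (r + 1)) * qnum (k - r) := by
            rw [hsub2]; rfl
          have := ih (r + 1) hrk
          calc v ^ (-(r : ℤ) - 1) * qb k (r + 1) * (qfac (r + 1) * qfac (k - r))
              = v ^ (-(r : ℤ) - 1) * qnum (k - r) * (qb k (r + 1) * (qfac (r + 1) * qfac (k - (r + 1)))) := by
                rw [hq]; ring
            _ = v ^ (-(r : ℤ) - 1) * qnum (k - r) * qfac k := by rw [this]
        rw [t1, t2]
        have hp := qnum_pascal (r + 1) (k - r)
        rw [show r + 1 + (k - r) = k + 1 by omega] at hp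
        have hc1 : v ^ (((k - r : ℕ)) : ℤ) = v ^ ((k : ℤ) - r) := by congr 1; omega
        have hc2 : v ^ (-(((r + 1 : ℕ)) : ℤ)) = v ^ (-(r : ℤ) - 1) := by congr 1; push_cast; ring
        rw [hc1, hc2] at hp
        have hq1 : qfac (k + 1) = qfac k * qnum (k + 1) := rfl
        rw [hq1, hp]
        ring

/-- The alternating sum `S a = Σ_r (-1)^r v^{r(a-1)} [a choose r]_v`. -/
def Sq (a : ℕ) : K := ∑ r ∈ range (a + 1), (-1 : K) ^ r * v ^ ((r : ℤ) * ((a : ℤ) - 1)) * qb a r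

lemma Sq_zero : Sq 0 = 1 := by simp [Sq, qb_zero]

lemma Sq_succ (a : ℕ) : Sq (a + 1) = (1 - v ^ (2 * (a : ℤ))) * Sq a := by
  set u : ℕ → K := fun r => (-1 : K) ^ r * v ^ ((r : ℤ) * ((a : ℤ) - 1)) * qb a r with hu
  set f : ℕ → K := fun r =>
    (-1 : K) ^ r * v ^ ((r : ℤ) * (((a + 1 : ℕ) : ℤ) - 1)) * qb (a + 1) r with hf
  have hSqa : Sq a = ∑ r ∈ range (a + 1), u r := rfl
  have h3 : u (a + 1) = 0 := by
    simp only [hu]; rw [qb_of_lt (by omega)]; ring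
  have h4 : u 0 = 1 := by simp [hu, qb_zero]
  have hsum2 : ∑ r ∈ range (a + 1), u (r + 1) = Sq a - 1 := by
    have h1 : ∑ r ∈ range (a + 2), u r = Sq a + u (a + 1) := by
      rw [Finset.sum_range_succ, hSqa]
    have h2 : ∑ r ∈ range (a + 2), u r = (∑ r ∈ range (a + 1), u (r + 1)) + u 0 :=
      Finset.sum_range_succ' u (a + 1)
    rw [h3, h4] at *
    linear_combination h2.symm.trans h1
  have key : ∀ r : ℕ, f (r + 1) = -(v ^ (2 * (a : ℤ)) * u r) + u (r + 1) := by
    intro r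
    simp only [hf, hu]
    have hqb : qb (a + 1) (r + 1) = v ^ ((a : ℤ) - r) * qb a r + v ^ (-(r : ℤ) - 1) * qb a (r + 1) := rfl
    rw [hqb]
    push_cast
    have e1 : v ^ (((r : ℤ) + 1) * ((a : ℤ) + 1 - 1)) * v ^ ((a : ℤ) - r)
        = v ^ (2 * (a : ℤ)) * v ^ ((r : ℤ) * ((a : ℤ) - 1)) := by
      rw [vpow_mul, vpow_mul]; congr 1; ring
    have e2 : v ^ (((r : ℤ) + 1) * ((a : ℤ) + 1 - 1)) * v ^ (-(r : ℤ) - 1)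
        = v ^ (((r : ℤ) + 1) * ((a : ℤ) - 1)) := by
      rw [vpow_mul]; congr 1; ring
    linear_combination ((-1 : K) ^ (r + 1) * qb a r) * e1 + ((-1 : K) ^ (r + 1) * qb a (r + 1)) * e2
  have hf0 : f 0 = 1 := by simp [hf, qb_zero]
  have hmain : Sq (a + 1) = (∑ r ∈ range (a + 1), f (r + 1)) + f 0 :=
    Finset.sum_range_succ' f (a + 1)
  rw [hmain, hf0, Finset.sum_congr rfl (fun r _ => key r), Finset.sum_add_distrib, hsum2]
  rw [Finset.sum_neg_distrib, ← Finset.mul_sum, ← hSqa]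
  ring


lemma Sq_eq_zero {a : ℕ} (ha : a ≠ 0) : Sq a = 0 := by
  induction a with
  | zero => exact absurd rfl ha
  | succ k ih =>
    rw [Sq_succ]
    rcases Nat.eq_zero_or_pos k with h | h
    · subst h; norm_num
    · rw [ih (by omega), mul_zero]

lemma inv_qfac_eq (a r : ℕ) (hra : r ≤ a) :
    (qfac r)⁻¹ * (qfac (a - r))⁻¹ = (qfac a)⁻¹ * qb a r := by
  have h := qb_mul_qfac a r hra
  have h1 := qfac_ne_zero r
  have h2 := qfac_ne_zero (a - r)
  have h3 := qfac_ne_zero a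
  field_simp
  linear_combination -h

lemma alt_inv_sum (a : ℕ) :
    ∑ r ∈ range (a + 1), (-1 : K) ^ r * v ^ ((r : ℤ) * ((a : ℤ) - 1)) *
        ((qfac r)⁻¹ * (qfac (a - r))⁻¹) = if a = 0 then 1 else 0 := by
  have hc : ∀ r ∈ range (a + 1),
      (-1 : K) ^ r * v ^ ((r : ℤ) * ((a : ℤ) - 1)) * ((qfac r)⁻¹ * (qfac (a - r))⁻¹)
        = (qfac a)⁻¹ * ((-1 : K) ^ r * v ^ ((r : ℤ) * ((a : ℤ) - 1)) * qb a r) := by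
    intro r hr
    rw [inv_qfac_eq a r (by simp at hr; omega)]
    ring
  rw [Finset.sum_congr rfl hc, ← Finset.mul_sum]
  have : ∑ r ∈ range (a + 1), (-1 : K) ^ r * v ^ ((r : ℤ) * ((a : ℤ) - 1)) * qb a r = Sq a := rfl
  rw [this]
  rcases Nat.eq_zero_or_pos a with h | h
  · subst h; rw [Sq_zero]; simp [qfac]
  · rw [Sq_eq_zero (by omega)]; simp [Nat.pos_iff_ne_zero.mp h]

lemma triangle_reindex {M : Type*} [AddCommMonoid M] (n : ℕ) (g : ℕ → ℕ → M) :
    ∑ p ∈ range (n + 1), ∑ r ∈ range (p + 1), g p r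
      = ∑ b ∈ range (n + 1), ∑ r ∈ range (n - b + 1), g (b + r) r := by
  rw [Finset.sum_sigma', Finset.sum_sigma']
  refine Finset.sum_nbij' (fun x => ⟨x.1 - x.2, x.2⟩) (fun x => ⟨x.1 + x.2, x.2⟩) ?_ ?_ ?_ ?_ ?_
  · rintro ⟨p, r⟩ h
    simp only [Finset.mem_sigma, Finset.mem_range] at h ⊢
    constructor <;> omega
  · rintro ⟨b, r⟩ h
    simp only [Finset.mem_sigma, Finset.mem_range] at h ⊢
    constructor <;> omega
  · rintro ⟨p, r⟩ h
    simp only [Finset.mem_sigma, Finset.mem_range] at h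
    simp only [Sigma.mk.inj_iff, heq_eq_eq]
    exact ⟨by omega, trivial⟩
  · rintro ⟨b, r⟩ h
    simp only [Finset.mem_sigma, Finset.mem_range] at h
    simp only [Sigma.mk.inj_iff, heq_eq_eq]
    exact ⟨by omega, trivial⟩
  · rintro ⟨p, r⟩ h
    simp only [Finset.mem_sigma, Finset.mem_range] at h
    have hh : p - r + r = p := by omega
    rw [hh]

theorem stmt0 (N m : ℕ) (hm : m ≤ N) :
    θj N * dp (θi N) m =
      ∑ p ∈ range (m + 1),
        v ^ (((p : ℤ) - (N : ℤ)) * ((m : ℤ) - (p : ℤ))) • (dp (θi N) (m - p) * fm N p) := by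
  set x := θi N with hx
  set y := θj N with hy
  set CC : ℕ → ℕ → K := fun p r =>
    v ^ (((p : ℤ) - (N : ℤ)) * ((m : ℤ) - (p : ℤ))) *
      ((-1 : K) ^ r * v ^ (-(r : ℤ) * ((N : ℤ) - (p : ℤ) + 1))) *
      ((qfac (m - p))⁻¹ * ((qfac r)⁻¹ * (qfac (p - r))⁻¹)) with hCC
  have stepA : ∀ p ∈ range (m + 1),
      v ^ (((p : ℤ) - (N : ℤ)) * ((m : ℤ) - (p : ℤ))) • (dp x (m - p) * fm N p)
        = ∑ r ∈ range (p + 1), CC p r • (x ^ (m - p + r) * y * x ^ (p - r)) := by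
    intro p hp
    rw [fm, dp, Finset.mul_sum, Finset.smul_sum]
    refine Finset.sum_congr rfl fun r hr => ?_
    simp only [dp, ← hx, ← hy]
    simp only [smul_mul_assoc, mul_smul_comm, smul_smul]
    have hmul : x ^ (m - p) * (x ^ r * y * x ^ (p - r))
        = x ^ (m - p + r) * y * x ^ (p - r) := by
      rw [← mul_assoc, ← mul_assoc, ← pow_add]
    rw [hmul, hCC]
    congr 1
    ring
  rw [Finset.sum_congr rfl stepA, triangle_reindex]
  have stepB : ∀ b ∈ range (m + 1),
      ∑ r ∈ range (m - b + 1), CC (b + r) r • (x ^ (m - (b + r) + r) * y * x ^ (b + r - r))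
        = (∑ r ∈ range (m - b + 1), CC (b + r) r) • (x ^ (m - b) * y * x ^ b) := by
    intro b hb
    rw [Finset.sum_smul]
    refine Finset.sum_congr rfl fun r hr => ?_
    simp only [Finset.mem_range] at hb hr
    have h1 : m - (b + r) + r = m - b := by omega
    have h2 : b + r - r = b := by omega
    rw [h1, h2]
  rw [Finset.sum_congr rfl stepB]
  have stepC : ∀ b ∈ range (m + 1),
      (∑ r ∈ range (m - b + 1), CC (b + r) r) = if b = m then (qfac m)⁻¹ else 0 := by
    intro b hb
    simp only [Finset.mem_range] at hb
    set a := m - b with ha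
    have hterm : ∀ r ∈ range (a + 1), CC (b + r) r
        = (v ^ (((b : ℤ) - (N : ℤ)) * ((a : ℕ) : ℤ)) * (qfac b)⁻¹) *
            ((-1 : K) ^ r * v ^ ((r : ℤ) * (((a : ℕ) : ℤ) - 1)) *
              ((qfac r)⁻¹ * (qfac (a - r))⁻¹)) := by
      intro r hr
      simp only [Finset.mem_range] at hr
      simp only [hCC]
      have h1 : m - (b + r) = a - r := by omega
      have h2 : b + r - r = b := by omega
      rw [h1, h2]
      have hE : v ^ ((((b + r : ℕ) : ℤ) - (N : ℤ)) * ((m : ℤ) - ((b + r : ℕ) : ℤ))) *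
            v ^ (-(r : ℤ) * ((N : ℤ) - ((b + r : ℕ) : ℤ) + 1))
          = v ^ (((b : ℤ) - (N : ℤ)) * ((a : ℕ) : ℤ)) *
            v ^ ((r : ℤ) * (((a : ℕ) : ℤ) - 1)) := by
        rw [vpow_mul, vpow_mul]
        congr 1
        have hcast : ((a : ℕ) : ℤ) = (m : ℤ) - (b : ℤ) := by omega
        rw [hcast]
        push_cast
        ring
      linear_combination
        ((-1 : K) ^ r * ((qfac (a - r))⁻¹ * ((qfac r)⁻¹ * (qfac b)⁻¹))) * hE
    rw [Finset.sum_congr rfl hterm, ← Finset.mul_sum, alt_inv_sum a]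
    rcases eq_or_lt_of_le (Nat.lt_succ_iff.mp hb) with h | h
    · subst h
      have ha0 : a = 0 := by omega
      rw [ha0]
      simp
    · have ha0 : a ≠ 0 := by omega
      rw [if_neg (show ¬ b = m by omega), if_neg ha0]
      ring
  have stepC' : ∀ b ∈ range (m + 1),
      (∑ r ∈ range (m - b + 1), CC (b + r) r) • (x ^ (m - b) * y * x ^ b)
        = (if b = m then (qfac m)⁻¹ else 0) • (x ^ (m - b) * y * x ^ b) :=
    fun b hb => by rw [stepC b hb]
  rw [Finset.sum_congr rfl stepC']
  rw [Finset.sum_eq_single m (fun b _ hbm => by rw [if_neg hbm, zero_smul])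
    (fun hmem => absurd (Finset.self_mem_range_succ m) hmem)]
  rw [if_pos rfl, Nat.sub_self, pow_zero, one_mul, dp, mul_smul_comm]
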